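/- arXiv:2012.05511 — 5 statements merged into one kernel-verified Lean document; each statement's English description precedes it below -/
import Mathlib

section
/- (Lemma 1) Let γ = log₂(V(z|u)/P(z)) - b be the correct-path metric with u uniform on {0,1} and z ~ V(·|u). For any r₀ ∈ (-1,0), the semi-invariant moment generating function satisfies h(r₀) := log₂ E[2^{r₀γ}] ≤ -r₀ b - (1+r₀) E_0(-r₀/(1+r₀), V), where E_0(ρ,V) = -log₂ Σ_z [Σ_u (1/2) V(z|u)^{1/(1+ρ)}]^{1+ρ}. -/
/-- Gallager's function `E₀(ρ, V)` for a binary-input channel `V` with uniform input. -/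
noncomputable def E0 {Z : Type*} [Fintype Z] (ρ : ℝ) (V : Bool → Z → ℝ) : ℝ :=
  -Real.logb 2 (∑ z, (∑ u, (1 / 2 : ℝ) * V u z ^ (1 / (1 + ρ))) ^ (1 + ρ))

/-- Lemma 1: the semi-invariant MGF of the correct-path metric
`γ = log₂(V(z|u)/P(z)) - b` satisfies
`h(r₀) ≤ -r₀ b - (1+r₀) E₀(-r₀/(1+r₀), V)` for `r₀ ∈ (-1,0)`. -/
theorem semiInvariantMGF_correct_path_le
    {Z : Type*} [Fintype Z] (V : Bool → Z → ℝ)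
    (hV : ∀ u z, 0 ≤ V u z) (hsum : ∀ u, ∑ z, V u z = 1)
    (b r₀ : ℝ) (hr₀ : r₀ ∈ Set.Ioo (-1 : ℝ) 0) :
    Real.logb 2 (∑ u, (1 / 2 : ℝ) * ∑ z, V u z *
        (V u z / ∑ u', (1 / 2 : ℝ) * V u' z) ^ r₀ * (2 : ℝ) ^ (-r₀ * b))
      ≤ -r₀ * b - (1 + r₀) * E0 (-r₀ / (1 + r₀)) V := by
  obtain ⟨hr1, hr0⟩ := hr₀
  have h1r : (0:ℝ) < 1 + r₀ := by linarith
  set P : Z → ℝ := fun z => ∑ u', (1 / 2 : ℝ) * V u' z with hPdef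
  have hPnn : ∀ z, 0 ≤ P z := fun z =>
    Finset.sum_nonneg fun u _ => mul_nonneg (by norm_num) (hV u z)
  have hPsum : ∑ z, P z = 1 := by
    rw [hPdef, Finset.sum_comm]
    simp [← Finset.mul_sum, hsum]
  have hPpos : ∀ u z, 0 < V u z → 0 < P z := by
    intro u z hv
    refine lt_of_lt_of_le (by positivity : (0:ℝ) < (1/2) * V u z) ?_
    exact Finset.single_le_sum (fun u' _ => mul_nonneg (by norm_num) (hV u' z))
      (Finset.mem_univ u)
  -- pointwise rewriting
  have key : ∀ u z, V u z * (V u z / P z) ^ r₀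
      = V u z ^ (1 + r₀) * P z ^ (-r₀) := by
    intro u z
    rcases eq_or_lt_of_le (hV u z) with h | h
    · rw [← h, Real.zero_rpow (by positivity : (1:ℝ)+r₀ ≠ 0), zero_mul, zero_mul]
    · have hP : 0 < P z := hPpos u z h
      rw [Real.div_rpow (hV u z) (hPnn z), Real.rpow_neg (hPnn z),
        div_eq_mul_inv, ← mul_assoc]
      congr 1
      rw [Real.rpow_add h 1 r₀, Real.rpow_one]
  set A : Z → ℝ := fun z => ∑ u, (1 / 2 : ℝ) * V u z ^ (1 + r₀) with hAdef
  have hAnn : ∀ z, 0 ≤ A z := fun z =>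
    Finset.sum_nonneg fun u _ => mul_nonneg (by norm_num) (Real.rpow_nonneg (hV u z) _)
  set S : ℝ := ∑ z, A z * P z ^ (-r₀) with hSdef
  -- the LHS sum equals 2^(-r₀ b) * S
  have hLHS : (∑ u, (1 / 2 : ℝ) * ∑ z, V u z * (V u z / P z) ^ r₀ * (2 : ℝ) ^ (-r₀ * b))
      = (2 : ℝ) ^ (-r₀ * b) * S := by
    rw [hSdef, Finset.mul_sum]
    calc ∑ u, (1 / 2 : ℝ) * ∑ z, V u z * (V u z / P z) ^ r₀ * (2 : ℝ) ^ (-r₀ * b)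
        = ∑ u, ∑ z, (1 / 2 : ℝ) * (V u z * (V u z / P z) ^ r₀ * (2 : ℝ) ^ (-r₀ * b)) := by
          simp [Finset.mul_sum]
      _ = ∑ z, ∑ u, (1 / 2 : ℝ) * (V u z * (V u z / P z) ^ r₀ * (2 : ℝ) ^ (-r₀ * b)) :=
          Finset.sum_comm
      _ = ∑ z, (2 : ℝ) ^ (-r₀ * b) * (A z * P z ^ (-r₀)) := by
          refine Finset.sum_congr rfl fun z _ => ?_
          simp only [hAdef, Finset.sum_mul, Finset.mul_sum]
          refine Finset.sum_congr rfl fun u _ => ?_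
          rw [key u z]
          ring
  -- positivity of S
  have hSpos : 0 < S := by
    have hex : ∃ z, 0 < V true z := by
      by_contra hc
      push_neg at hc
      have : ∑ z, V true z = 0 :=
        le_antisymm (Finset.sum_nonpos fun z _ => hc z)
          (Finset.sum_nonneg fun z _ => hV true z)
      rw [hsum true] at this; norm_num at this
    obtain ⟨z, hz⟩ := hex
    have hP : 0 < P z := hPpos true z hz
    have hterm : 0 < A z * P z ^ (-r₀) := by
      have hA : 0 < A z := by
        refine lt_of_lt_of_le ?_ (Finset.single_le_sum
          (fun u _ => mul_nonneg (by norm_num) (Real.rpow_nonneg (hV u z) _))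
          (Finset.mem_univ true))
        have := Real.rpow_pos_of_pos hz (1 + r₀); positivity
      have := Real.rpow_pos_of_pos hP (-r₀)
      positivity
    refine lt_of_lt_of_le hterm ?_
    exact Finset.single_le_sum (fun z' _ => mul_nonneg (hAnn z')
      (Real.rpow_nonneg (hPnn z') _)) (Finset.mem_univ z)
  -- Hölder
  set T : ℝ := ∑ z, A z ^ (1 / (1 + r₀)) with hTdef
  have hTnn : 0 ≤ T := Finset.sum_nonneg fun z _ => Real.rpow_nonneg (hAnn z) _
  have holder : S ≤ T ^ (1 + r₀) := by
    have hpq : Real.HolderConjugate (1 / (1 + r₀)) (1 / (-r₀)) := by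
      refine ⟨?_, div_pos one_pos h1r, div_pos one_pos (by linarith)⟩
      rw [one_div, one_div, inv_inv, inv_inv, inv_one]; ring
    have := Real.inner_le_Lp_mul_Lq_of_nonneg (s := Finset.univ) hpq
      (f := A) (g := fun z => P z ^ (-r₀))
      (fun z _ => hAnn z) (fun z _ => Real.rpow_nonneg (hPnn z) _)
    simp only [one_div_one_div] at this
    calc S ≤ (∑ z, A z ^ (1 / (1 + r₀))) ^ (1 + r₀) *
          (∑ z, (P z ^ (-r₀)) ^ (1 / (-r₀))) ^ (-r₀) := this
      _ = T ^ (1 + r₀) := by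
          have hPz : ∀ z : Z, (P z ^ (-r₀)) ^ (1 / (-r₀)) = P z := by
            intro z
            rw [← Real.rpow_mul (hPnn z), mul_one_div,
              div_self (by linarith : (-r₀ : ℝ) ≠ 0), Real.rpow_one]
          simp only [hPz, hPsum, Real.one_rpow, mul_one, hTdef]
  have hTpos : 0 < T := by
    rcases hTnn.lt_or_eq with h | h
    · exact h
    · exfalso
      rw [← h, Real.zero_rpow (ne_of_gt h1r)] at holder
      linarith
  have hE : E0 (-r₀ / (1 + r₀)) V = -Real.logb 2 T := by
    rw [E0]
    congr 2
    rw [hTdef]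
    have h1 : 1 + (-r₀ / (1 + r₀)) = 1 / (1 + r₀) := by field_simp; ring
    rw [h1, one_div_one_div]
  have hlog : Real.logb 2 S ≤ (1 + r₀) * Real.logb 2 T := by
    have h2 : Real.log S ≤ Real.log (T ^ (1 + r₀)) := Real.log_le_log hSpos holder
    rw [Real.log_rpow hTpos] at h2
    have hl2 : (0:ℝ) < Real.log 2 := Real.log_pos (by norm_num)
    rw [Real.logb, Real.logb]
    calc Real.log S / Real.log 2 ≤ ((1 + r₀) * Real.log T) / Real.log 2 :=
          (div_le_div_iff_of_pos_right hl2).mpr h2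
      _ = (1 + r₀) * (Real.log T / Real.log 2) := by ring
  rw [hLHS, Real.logb_mul (by positivity) (ne_of_gt hSpos),
    Real.logb_rpow (by norm_num) (by norm_num), hE]
  linarith
end

section
/- (Lemma 2) Let γ̃ = log₂(V(z|ũ)/P(z)) - b be the wrong-path metric where z ~ P(·) and ũ is uniform on {0,1} independent of z. For any r ∈ (0,1), log₂ E[2^{rγ̃}] ≤ -r b - r E_0((1-r)/r, V), where E_0(ρ,V) = -log₂ Σ_z [Σ_u (1/2) V(z|u)^{1/(1+ρ)}]^{1+ρ}. -/
/-- Lemma 2: the semi-invariant MGF of the wrong-path metric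
`γ̃ = log₂(V(z|ũ)/P(z)) - b` (with `z ~ P` and `ũ` uniform independent of `z`)
satisfies `log₂ E[2^{rγ̃}] ≤ -r b - r E₀((1-r)/r, V)` for `r ∈ (0,1)`. -/
theorem semiInvariantMGF_wrong_path_le
    {Z : Type*} [Fintype Z] (V : Bool → Z → ℝ)
    (hV : ∀ u z, 0 ≤ V u z) (hsum : ∀ u, ∑ z, V u z = 1)
    (b r : ℝ) (hr : r ∈ Set.Ioo (0 : ℝ) 1) :
    Real.logb 2 ((2 : ℝ) ^ (-r * b) *
        ∑ z, (∑ u, (1 / 2 : ℝ) * V u z) ^ (1 - r) *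
          ∑ v, (1 / 2 : ℝ) * V v z ^ r)
      ≤ -r * b - r * E0 ((1 - r) / r) V := by
  obtain ⟨hr0, hr1⟩ := hr
  have hrne : r ≠ 0 := ne_of_gt hr0
  have h1r : (0:ℝ) < 1 - r := by linarith
  set P : Z → ℝ := fun z => ∑ u, (1 / 2 : ℝ) * V u z with hP
  set A : Z → ℝ := fun z => ∑ v, (1 / 2 : ℝ) * V v z ^ r with hA
  have hPnn : ∀ z, 0 ≤ P z := fun z =>
    Finset.sum_nonneg fun u _ => by have := hV u z; positivity
  have hAnn : ∀ z, 0 ≤ A z := fun z =>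
    Finset.sum_nonneg fun v _ => by
      have := hV v z; positivity
  -- some output has positive probability
  obtain ⟨z0, hz0⟩ : ∃ z, 0 < V true z := by
    by_contra h
    push_neg at h
    have h1 := hsum true
    have : ∑ z, V true z ≤ 0 := Finset.sum_nonpos fun z _ => h z
    linarith
  have hPz0 : 0 < P z0 := by
    have h1 : (1 / 2 : ℝ) * V true z0 ≤ P z0 :=
      Finset.single_le_sum (f := fun u => (1 / 2 : ℝ) * V u z0)
        (fun u _ => by have := hV u z0; positivity) (Finset.mem_univ true)
    nlinarith
  have hAz0 : 0 < A z0 := by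
    have h2 : (1 / 2 : ℝ) * V true z0 ^ r ≤ A z0 :=
      Finset.single_le_sum (f := fun v => (1 / 2 : ℝ) * V v z0 ^ r)
        (fun v _ => by have := hV v z0; positivity) (Finset.mem_univ true)
    have : (0:ℝ) < V true z0 ^ r := Real.rpow_pos_of_pos hz0 r
    nlinarith
  set S : ℝ := ∑ z, P z ^ (1 - r) * A z with hS
  set T : ℝ := ∑ z, A z ^ r⁻¹ with hT
  have hSpos : 0 < S := by
    apply Finset.sum_pos' (fun z _ => by
      have := hPnn z; have := hAnn z; positivity)
    exact ⟨z0, Finset.mem_univ z0, by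
      have : (0:ℝ) < P z0 ^ (1 - r) := Real.rpow_pos_of_pos hPz0 _
      nlinarith⟩
  have hTpos : 0 < T := by
    apply Finset.sum_pos' (fun z _ => Real.rpow_nonneg (hAnn z) _)
    exact ⟨z0, Finset.mem_univ z0, Real.rpow_pos_of_pos hAz0 _⟩
  -- sum of P is 1
  have hPsum : ∑ z, P z = 1 := by
    simp only [hP]
    rw [Finset.sum_comm]
    simp [← Finset.mul_sum, hsum]
  -- Hölder's inequality
  have hconj : Real.HolderConjugate (1 - r)⁻¹ r⁻¹ := by
    rw [Real.holderConjugate_iff]; constructor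
    · rw [lt_inv_comm₀ one_pos h1r]; simpa using hr0
    · rw [inv_inv, inv_inv]; ring
  have hHolder : S ≤ T ^ r := by
    have h := Real.inner_le_Lp_mul_Lq_of_nonneg (s := Finset.univ (α := Z))
      (f := fun z => P z ^ (1 - r)) (g := A) hconj
      (fun z _ => Real.rpow_nonneg (hPnn z) _) (fun z _ => hAnn z)
    have e1 : ∀ z : Z, (P z ^ (1 - r)) ^ (1 - r)⁻¹ = P z := by
      intro z
      rw [← Real.rpow_mul (hPnn z), mul_inv_cancel₀ (ne_of_gt h1r), Real.rpow_one]
    simp only [e1, hPsum, one_div, inv_inv, Real.one_rpow, one_mul] at h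
    exact h
  -- rewrite E0 at the conjugate exponent
  have hρ : 1 + (1 - r) / r = r⁻¹ := by field_simp; ring
  have hE : E0 ((1 - r) / r) V = -Real.logb 2 T := by
    rw [E0, hρ]
    simp only [one_div, inv_inv, hT, hA]
  rw [hE]
  have hrw : -r * b - r * -Real.logb 2 T = -r * b + Real.logb 2 (T ^ r) := by
    rw [Real.logb_rpow_eq_mul_logb_of_pos hTpos]; ring
  rw [hrw]
  have h2pos : (0:ℝ) < (2:ℝ) ^ (-r * b) := Real.rpow_pos_of_pos two_pos _
  rw [Real.logb_mul (ne_of_gt h2pos) (ne_of_gt hSpos),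
    Real.logb_rpow (by norm_num) (by norm_num)]
  exact add_le_add_right
    (Real.logb_le_logb_of_le one_lt_two hSpos hHolder) _
end

section
/- (Lemma 3, unbiased core) For independent u, ũ uniform on {0,1} and z ~ V(·|u), and any r ∈ (0,1), E[2^{r(log₂ V(z|ũ) - log₂ V(z|u))}] ≤ 2^{-(1-r)E_0(r/(1-r),V)} · 2^{-r E_0((1-r)/r, V)}, where E_0(ρ,V) = -log₂ Σ_z [Σ_u (1/2) V(z|u)^{1/(1+ρ)}]^{1+ρ}. -/
/-- Lemma 3, unbiased core: for independent `u, ũ` uniform on `{0,1}` and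
`z ~ V(·|u)`, and any `r ∈ (0,1)`,
`E[2^{r(log₂ V(z|ũ) - log₂ V(z|u))}] ≤ 2^{-(1-r)E₀(r/(1-r),V)} · 2^{-r E₀((1-r)/r,V)}`.
The left-hand side equals `Σ_z (Σ_u ½ V(z|u)^{1-r})(Σ_ũ ½ V(z|ũ)^r)`. -/
theorem mgf_metric_difference_le
    {Z : Type*} [Fintype Z] (V : Bool → Z → ℝ)
    (hV : ∀ u z, 0 ≤ V u z) (hsum : ∀ u, ∑ z, V u z = 1)
    (r : ℝ) (hr : r ∈ Set.Ioo (0 : ℝ) 1) :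
    ∑ z, (∑ u, (1 / 2 : ℝ) * V u z ^ (1 - r)) * (∑ v, (1 / 2 : ℝ) * V v z ^ r)
      ≤ (2 : ℝ) ^ (-(1 - r) * E0 (r / (1 - r)) V) *
        (2 : ℝ) ^ (-r * E0 ((1 - r) / r) V) := by
  obtain ⟨hr0, hr1⟩ := hr
  have h1r : (0:ℝ) < 1 - r := by linarith
  have hnn : ∀ (s : ℝ) z, 0 ≤ ∑ u, (1/2:ℝ) * V u z ^ s := fun s z =>
    Finset.sum_nonneg fun u _ => mul_nonneg (by norm_num) (Real.rpow_nonneg (hV u z) _)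
  obtain ⟨z0, _, hz0⟩ : ∃ z ∈ Finset.univ, 0 < V true z := by
    by_contra h
    push_neg at h
    have : ∑ z, V true z = 0 := Finset.sum_eq_zero fun z hz => le_antisymm (h z hz) (hV true z)
    rw [hsum true] at this; norm_num at this
  have hApos : ∀ s : ℝ, 0 < ∑ z, (∑ u, (1/2:ℝ) * V u z ^ s) ^ (1/s) := by
    intro s
    refine Finset.sum_pos' (fun z _ => Real.rpow_nonneg (hnn s z) _) ⟨z0, Finset.mem_univ _, ?_⟩
    apply Real.rpow_pos_of_pos
    refine Finset.sum_pos' (fun u _ => mul_nonneg (by norm_num) (Real.rpow_nonneg (hV u z0) _))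
      ⟨true, Finset.mem_univ _, mul_pos (by norm_num) (Real.rpow_pos_of_pos hz0 _)⟩
  have e1 : (1:ℝ) + r / (1 - r) = 1 / (1 - r) := by field_simp; ring
  have e2 : (1:ℝ) / (1 / (1 - r)) = 1 - r := by field_simp
  have e3 : (1:ℝ) + (1 - r) / r = 1 / r := by field_simp; ring
  have e4 : (1:ℝ) / (1 / r) = r := by field_simp
  have hR1 : (2 : ℝ) ^ (-(1 - r) * E0 (r / (1 - r)) V)
      = (∑ z, (∑ u, (1/2:ℝ) * V u z ^ (1 - r)) ^ (1/(1-r))) ^ (1 - r) := by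
    rw [E0, e1, e2]
    rw [show -(1-r) * -Real.logb 2 (∑ z, (∑ u, (1/2:ℝ) * V u z ^ (1 - r)) ^ (1/(1-r)))
        = Real.logb 2 (∑ z, (∑ u, (1/2:ℝ) * V u z ^ (1 - r)) ^ (1/(1-r))) * (1-r) by ring]
    rw [Real.rpow_mul (by norm_num), Real.rpow_logb (by norm_num) (by norm_num) (hApos _)]
  have hR2 : (2 : ℝ) ^ (-r * E0 ((1 - r) / r) V)
      = (∑ z, (∑ u, (1/2:ℝ) * V u z ^ r) ^ (1/r)) ^ r := by
    rw [E0, e3, e4]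
    rw [show -r * -Real.logb 2 (∑ z, (∑ u, (1/2:ℝ) * V u z ^ r) ^ (1/r))
        = Real.logb 2 (∑ z, (∑ u, (1/2:ℝ) * V u z ^ r) ^ (1/r)) * r by ring]
    rw [Real.rpow_mul (by norm_num), Real.rpow_logb (by norm_num) (by norm_num) (hApos _)]
  rw [hR1, hR2]
  have hconj : Real.HolderConjugate (1/(1-r)) (1/r) := by
    rw [Real.holderConjugate_iff]; constructor
    · rw [lt_div_iff₀ h1r]; linarith
    · simp only [one_div, inv_inv]; ring
  calc ∑ z, (∑ u, (1/2:ℝ) * V u z ^ (1 - r)) * (∑ v, (1/2:ℝ) * V v z ^ r)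
      ≤ (∑ z, (∑ u, (1/2:ℝ) * V u z ^ (1 - r)) ^ (1/(1-r))) ^ (1/(1/(1-r)))
        * (∑ z, (∑ u, (1/2:ℝ) * V u z ^ r) ^ (1/r)) ^ (1/(1/r)) :=
        Real.inner_le_Lp_mul_Lq_of_nonneg _ hconj (fun z _ => hnn _ z) (fun z _ => hnn _ z)
    _ = _ := by rw [e2, e4]
end

section
/- (Lemma 3) Let γ = log₂(V(z|u)/P(z)) - b and γ̃ = log₂(V(z|ũ)/P(z)) - b with u, ũ independent uniform on {0,1} and z ~ V(·|u). Suppose r ∈ (0,1) and b ≤ ((1-r)/r) E_0(r/(1-r), V). Then log₂ E[2^{r(γ̃ - γ)}] ≤ -r b - r E_0((1-r)/r, V). -/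
/-- Lemma 3: with `γ = log₂(V(z|u)/P(z)) - b`, `γ̃ = log₂(V(z|ũ)/P(z)) - b`,
`u, ũ` independent uniform and `z ~ V(·|u)`, `r ∈ (0,1)` and
`b ≤ ((1-r)/r) E₀(r/(1-r), V)`, one has
`log₂ E[2^{r(γ̃-γ)}] ≤ -r b - r E₀((1-r)/r, V)`.
Here `E[2^{r(γ̃-γ)}] = Σ_z (Σ_u ½ V(z|u)^{1-r})(Σ_ũ ½ V(z|ũ)^r)` since the biases cancel. -/
theorem semiInvariantMGF_metric_difference_le
    {Z : Type*} [Fintype Z] (V : Bool → Z → ℝ)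
    (hV : ∀ u z, 0 ≤ V u z) (hsum : ∀ u, ∑ z, V u z = 1)
    (b r : ℝ) (hr : r ∈ Set.Ioo (0 : ℝ) 1)
    (hb : b ≤ ((1 - r) / r) * E0 (r / (1 - r)) V) :
    Real.logb 2
        (∑ z, (∑ u, (1 / 2 : ℝ) * V u z ^ (1 - r)) * (∑ v, (1 / 2 : ℝ) * V v z ^ r))
      ≤ -r * b - r * E0 ((1 - r) / r) V := by
  obtain ⟨hr0, hr1⟩ := hr
  have h1r : (0 : ℝ) < 1 - r := by linarith
  -- some z with V true z > 0
  obtain ⟨z0, -, hz0⟩ : ∃ z ∈ Finset.univ, 0 < V true z := by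
    by_contra h
    push_neg at h
    have : ∑ z, V true z = 0 :=
      Finset.sum_eq_zero fun z hz => le_antisymm (h z hz) (hV true z)
    rw [hsum true] at this; norm_num at this
  set A : Z → ℝ := fun z => ∑ u, (1 / 2 : ℝ) * V u z ^ (1 - r) with hA
  set B : Z → ℝ := fun z => ∑ v, (1 / 2 : ℝ) * V v z ^ r with hB
  have hApos : ∀ z, 0 ≤ A z := fun z =>
    Finset.sum_nonneg fun u _ =>
      mul_nonneg (by norm_num) (Real.rpow_nonneg (hV u z) _)
  have hBpos : ∀ z, 0 ≤ B z := fun z =>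
    Finset.sum_nonneg fun u _ =>
      mul_nonneg (by norm_num) (Real.rpow_nonneg (hV u z) _)
  have hAz0 : 0 < A z0 := by
    have : (1/2 : ℝ) * V true z0 ^ (1 - r) ≤ A z0 := by
      rw [hA]
      exact Finset.single_le_sum (f := fun u => (1/2:ℝ) * V u z0 ^ (1-r))
        (fun u _ => mul_nonneg (by norm_num) (Real.rpow_nonneg (hV u z0) _))
        (Finset.mem_univ true)
    have h2 : 0 < (1/2 : ℝ) * V true z0 ^ (1 - r) :=
      mul_pos (by norm_num) (Real.rpow_pos_of_pos hz0 _)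
    linarith
  have hBz0 : 0 < B z0 := by
    have : (1/2 : ℝ) * V true z0 ^ r ≤ B z0 := by
      rw [hB]
      exact Finset.single_le_sum (f := fun u => (1/2:ℝ) * V u z0 ^ r)
        (fun u _ => mul_nonneg (by norm_num) (Real.rpow_nonneg (hV u z0) _))
        (Finset.mem_univ true)
    have h2 : 0 < (1/2 : ℝ) * V true z0 ^ r :=
      mul_pos (by norm_num) (Real.rpow_pos_of_pos hz0 _)
    linarith
  have hS : 0 < ∑ z, A z * B z := by
    apply Finset.sum_pos' (fun z _ => mul_nonneg (hApos z) (hBpos z))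
    exact ⟨z0, Finset.mem_univ z0, mul_pos hAz0 hBz0⟩
  -- exponent algebra
  have e1 : 1 + r / (1 - r) = 1 / (1 - r) := by field_simp; ring
  have e2 : 1 / (1 + r / (1 - r)) = 1 - r := by rw [e1]; field_simp
  have e3 : 1 + (1 - r) / r = 1 / r := by field_simp; ring
  have e4 : 1 / (1 + (1 - r) / r) = r := by rw [e3]; field_simp
  set T1 : ℝ := ∑ z, A z ^ (1 / (1 - r)) with hT1
  set T2 : ℝ := ∑ z, B z ^ (1 / r) with hT2
  have hT1pos : 0 < T1 := by
    apply Finset.sum_pos' (fun z _ => Real.rpow_nonneg (hApos z) _)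
    exact ⟨z0, Finset.mem_univ z0, Real.rpow_pos_of_pos hAz0 _⟩
  have hT2pos : 0 < T2 := by
    apply Finset.sum_pos' (fun z _ => Real.rpow_nonneg (hBpos z) _)
    exact ⟨z0, Finset.mem_univ z0, Real.rpow_pos_of_pos hBz0 _⟩
  have hE1 : E0 (r / (1 - r)) V = -Real.logb 2 T1 := by
    rw [E0, hT1, hA]
    simp only [e2]; simp only [e1]
  have hE2 : E0 ((1 - r) / r) V = -Real.logb 2 T2 := by
    rw [E0, hT2, hB]
    simp only [e4]; simp only [e3]
  have hT1eq : T1 = (2:ℝ) ^ (-(E0 (r / (1 - r)) V)) := by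
    rw [hE1, neg_neg, Real.rpow_logb (by norm_num) (by norm_num) hT1pos]
  have hT2eq : T2 = (2:ℝ) ^ (-(E0 ((1 - r) / r) V)) := by
    rw [hE2, neg_neg, Real.rpow_logb (by norm_num) (by norm_num) hT2pos]
  -- Hölder
  have hpq : Real.HolderConjugate (1 / (1 - r)) (1 / r) := by
    constructor
    · rw [one_div, one_div, inv_inv, inv_inv, inv_one]; ring
    · positivity
    · positivity
  have holder : ∑ z, A z * B z ≤ T1 ^ (1 - r) * T2 ^ r := by
    have := Real.inner_le_Lp_mul_Lq_of_nonneg (s := (Finset.univ : Finset Z))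
      hpq (fun z _ => hApos z) (fun z _ => hBpos z)
    rw [one_div_one_div, one_div_one_div] at this
    exact this
  rw [Real.logb_le_iff_le_rpow (by norm_num) hS]
  calc ∑ z, A z * B z ≤ T1 ^ (1 - r) * T2 ^ r := holder
    _ = (2:ℝ) ^ (-(1 - r) * E0 (r / (1 - r)) V) * (2:ℝ) ^ (-r * E0 ((1 - r) / r) V) := by
        rw [hT1eq, hT2eq]
        rw [← Real.rpow_mul (by norm_num : (0:ℝ) ≤ 2), ← Real.rpow_mul (by norm_num : (0:ℝ) ≤ 2)]
        ring_nf
    _ ≤ (2:ℝ) ^ (-r * b) * (2:ℝ) ^ (-r * E0 ((1 - r) / r) V) := by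
        apply mul_le_mul_of_nonneg_right _ (Real.rpow_nonneg (by norm_num) _)
        apply Real.rpow_le_rpow_left_iff (by norm_num : (1:ℝ) < 2) |>.mpr
        have : r * b ≤ (1 - r) * E0 (r / (1 - r)) V := by
          have := mul_le_mul_of_nonneg_left hb hr0.le
          calc r * b ≤ r * (((1 - r) / r) * E0 (r / (1 - r)) V) := this
            _ = (1 - r) * E0 (r / (1 - r)) V := by field_simp
        linarith
    _ = (2:ℝ) ^ (-r * b - r * E0 ((1 - r) / r) V) := by
        rw [← Real.rpow_add (by norm_num : (0:ℝ) < 2)]; ring_nf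
end

section
/- Gallager's E_0 function divided by ρ is nonincreasing in ρ > 0: for a binary-input channel V with uniform input and 0 < ρ₁ ≤ ρ₂, E_0(ρ₂,V)/ρ₂ ≤ E_0(ρ₁,V)/ρ₁. In particular, for 0 < δ < 1, E_0(1,V) ≤ E_0(δ,V)/δ. -/
open Finset

/-- Hölder's inequality in "geometric mean" form. -/
lemma holder_geom {ι : Type*} (s : Finset ι) (a b : ι → ℝ)
    (ha : ∀ i, 0 ≤ a i) (hb : ∀ i, 0 ≤ b i) {μ : ℝ} (h0 : 0 < μ) (h1 : μ < 1) :
    ∑ i ∈ s, (a i) ^ μ * (b i) ^ (1 - μ) ≤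
      (∑ i ∈ s, a i) ^ μ * (∑ i ∈ s, b i) ^ (1 - μ) := by
  have h1μ : 0 < 1 - μ := by linarith
  have hpq : Real.HolderConjugate μ⁻¹ (1 - μ)⁻¹ := by
    rw [Real.holderConjugate_iff]
    constructor
    · rw [lt_inv_comm₀ one_pos h0]; simpa using h1
    · rw [inv_inv, inv_inv]; ring
  have H := Real.inner_le_Lp_mul_Lq_of_nonneg s (f := fun i => a i ^ μ)
      (g := fun i => b i ^ (1 - μ)) hpq
      (fun i _ => Real.rpow_nonneg (ha i) _) (fun i _ => Real.rpow_nonneg (hb i) _)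
  have e1 : ∀ i, (a i ^ μ) ^ (μ⁻¹) = a i := fun i => by
    rw [← Real.rpow_mul (ha i), mul_inv_cancel₀ h0.ne', Real.rpow_one]
  have e2 : ∀ i, (b i ^ (1 - μ)) ^ ((1 - μ)⁻¹) = b i := fun i => by
    rw [← Real.rpow_mul (hb i), mul_inv_cancel₀ h1μ.ne', Real.rpow_one]
  simpa [e1, e2, one_div, inv_inv] using H

/-- The key inequality, strict case. -/
lemma E0_key {Z : Type*} [Fintype Z] (V : Bool → Z → ℝ)
    (hV : ∀ u z, 0 ≤ V u z) (hsum : ∀ u, ∑ z, V u z = 1)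
    {ρ₁ ρ₂ : ℝ} (hρ₁ : 0 < ρ₁) (h12 : ρ₁ < ρ₂) :
    E0 ρ₂ V / ρ₂ ≤ E0 ρ₁ V / ρ₁ := by
  have hρ₂ : 0 < ρ₂ := hρ₁.trans h12
  set q₁ : ℝ := 1 + ρ₁ with hq₁def
  set q₂ : ℝ := 1 + ρ₂ with hq₂def
  have hq₁ : 0 < q₁ := by positivity
  have hq₂ : 0 < q₂ := by positivity
  set lam : ℝ := ρ₁ / ρ₂ with hlam
  have hlam0 : 0 < lam := div_pos hρ₁ hρ₂
  have hlam1 : lam < 1 := (div_lt_one hρ₂).2 h12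
  set μ : ℝ := lam * q₂ / q₁ with hμdef
  have hμ0 : 0 < μ := div_pos (mul_pos hlam0 hq₂) hq₁
  have hμ1 : μ < 1 := by
    rw [hμdef, div_lt_one hq₁, hq₁def, hq₂def, hlam]
    rw [div_mul_eq_mul_div, div_lt_iff₀ hρ₂]
    nlinarith
  -- per-z sums
  set S : ℝ → Z → ℝ := fun t z => ∑ u, (1 / 2 : ℝ) * V u z ^ t with hS
  have hSnn : ∀ t z, 0 ≤ S t z := fun t z =>
    Finset.sum_nonneg fun u _ => mul_nonneg (by norm_num) (Real.rpow_nonneg (hV u z) _)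
  -- key exponent identities
  have hμq : μ * q₁ = lam * q₂ := by
    rw [hμdef]; field_simp
  have hq : q₁ = lam * q₂ + (1 - lam) := by
    rw [hq₁def, hq₂def, hlam]; field_simp; ring
  have hμq' : (1 - μ) * q₁ = 1 - lam := by
    have h : (1 - μ) * q₁ = q₁ - μ * q₁ := by ring
    rw [h, hμq, hq]; ring
  have hexp : μ * (1 / q₂) + (1 - μ) = 1 / q₁ := by
    have h1 : μ * (1 / q₂) * q₁ = lam := by
      rw [show μ * (1/q₂) * q₁ = μ * q₁ * (1/q₂) by ring, hμq]
      field_simp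
    have h3 : (μ * (1 / q₂) + (1 - μ)) * q₁ = 1 := by
      rw [add_mul, h1, hμq']; ring
    rw [eq_div_iff hq₁.ne']
    exact h3
  -- Step 1: per-z Hölder
  have step1 : ∀ z, S (1 / q₁) z ≤ (S (1 / q₂) z) ^ μ * (S 1 z) ^ (1 - μ) := by
    intro z
    have H := holder_geom (Finset.univ : Finset Bool)
        (fun u => (1 / 2 : ℝ) * V u z ^ (1 / q₂)) (fun u => (1 / 2 : ℝ) * V u z ^ (1 : ℝ))
        (fun u => mul_nonneg (by norm_num) (Real.rpow_nonneg (hV u z) _))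
        (fun u => mul_nonneg (by norm_num) (Real.rpow_nonneg (hV u z) _)) hμ0 hμ1
    have e : ∀ u : Bool, ((1 / 2 : ℝ) * V u z ^ (1 / q₂)) ^ μ *
        ((1 / 2 : ℝ) * V u z ^ (1 : ℝ)) ^ (1 - μ) = (1 / 2 : ℝ) * V u z ^ (1 / q₁) := by
      intro u
      rw [Real.mul_rpow (by norm_num) (Real.rpow_nonneg (hV u z) _),
          Real.mul_rpow (by norm_num) (Real.rpow_nonneg (hV u z) _),
          ← Real.rpow_mul (hV u z), ← Real.rpow_mul (hV u z)]
      have h2 : ((1:ℝ)/2) ^ μ * ((1:ℝ)/2) ^ (1 - μ) = 1/2 := by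
        rw [← Real.rpow_add (by norm_num : (0:ℝ) < 1/2)]
        norm_num
      have hx : V u z ^ (1 / q₂ * μ) * V u z ^ ((1:ℝ) * (1 - μ)) = V u z ^ (1 / q₁) := by
        rw [← Real.rpow_add' (hV u z) (by rw [show 1/q₂*μ + 1*(1-μ) = μ*(1/q₂) + (1-μ) by ring, hexp]; positivity)]
        rw [show 1/q₂*μ + 1*(1-μ) = μ*(1/q₂) + (1-μ) by ring, hexp]
      calc ((1:ℝ)/2) ^ μ * V u z ^ (1 / q₂ * μ) * (((1:ℝ)/2) ^ (1-μ) * V u z ^ ((1:ℝ) * (1 - μ)))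
          = (((1:ℝ)/2) ^ μ * ((1:ℝ)/2) ^ (1-μ)) * (V u z ^ (1 / q₂ * μ) * V u z ^ ((1:ℝ)*(1 - μ))) := by ring
        _ = (1/2 : ℝ) * V u z ^ (1 / q₁) := by rw [h2, hx]
    calc S (1 / q₁) z = ∑ u, ((1 / 2 : ℝ) * V u z ^ (1 / q₂)) ^ μ *
            ((1 / 2 : ℝ) * V u z ^ (1 : ℝ)) ^ (1 - μ) := by
          rw [hS]; exact (Finset.sum_congr rfl fun u _ => (e u)).symm
      _ ≤ _ := H
  -- Step 2: raise to power q₁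
  have step2 : ∀ z, (S (1 / q₁) z) ^ q₁ ≤ ((S (1 / q₂) z) ^ q₂) ^ lam * (S 1 z) ^ (1 - lam) := by
    intro z
    have h := Real.rpow_le_rpow (hSnn (1/q₁) z) (step1 z) hq₁.le
    calc (S (1 / q₁) z) ^ q₁ ≤ ((S (1 / q₂) z) ^ μ * (S 1 z) ^ (1 - μ)) ^ q₁ := h
      _ = ((S (1 / q₂) z) ^ q₂) ^ lam * (S 1 z) ^ (1 - lam) := by
          rw [Real.mul_rpow (Real.rpow_nonneg (hSnn _ z) _) (Real.rpow_nonneg (hSnn _ z) _),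
              ← Real.rpow_mul (hSnn _ z), ← Real.rpow_mul (hSnn _ z), hμq, hμq',
              ← Real.rpow_mul (hSnn _ z), mul_comm lam q₂]
  -- Sum over z and apply Hölder again
  set F : ℝ → ℝ := fun ρ => ∑ z, (S (1 / (1 + ρ)) z) ^ (1 + ρ) with hF
  have hF0 : (∑ z, S 1 z) = 1 := by
    rw [hS]
    simp only []
    rw [Finset.sum_comm]
    have : ∀ u : Bool, ∑ z, (1 / 2 : ℝ) * V u z ^ (1:ℝ) = 1/2 := by
      intro u
      simp only [Real.rpow_one, ← Finset.mul_sum, hsum u, mul_one]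
    rw [Finset.sum_congr rfl fun u _ => this u]
    norm_num
  have key : F ρ₁ ≤ (F ρ₂) ^ lam := by
    have H := holder_geom (Finset.univ : Finset Z)
        (fun z => (S (1 / q₂) z) ^ q₂) (fun z => S 1 z)
        (fun z => Real.rpow_nonneg (hSnn _ z) _) (fun z => hSnn 1 z) hlam0 hlam1
    calc F ρ₁ = ∑ z, (S (1 / q₁) z) ^ q₁ := rfl
      _ ≤ ∑ z, ((S (1 / q₂) z) ^ q₂) ^ lam * (S 1 z) ^ (1 - lam) :=
          Finset.sum_le_sum fun z _ => step2 z
      _ ≤ (∑ z, (S (1 / q₂) z) ^ q₂) ^ lam * (∑ z, S 1 z) ^ (1 - lam) := H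
      _ = (F ρ₂) ^ lam := by rw [hF0, Real.one_rpow, mul_one]
  -- positivity of F
  have hpos : ∀ ρ : ℝ, 0 < ρ → 0 < F ρ := by
    intro ρ hρ
    obtain ⟨z₀, -, hz₀⟩ : ∃ z ∈ (Finset.univ : Finset Z), 0 < V true z := by
      by_contra hcon
      push_neg at hcon
      have : ∑ z, V true z ≤ 0 := Finset.sum_nonpos fun z hz => hcon z hz
      rw [hsum true] at this; linarith
    refine Finset.sum_pos' (fun z _ => Real.rpow_nonneg (hSnn _ z) _) ⟨z₀, Finset.mem_univ z₀, ?_⟩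
    apply Real.rpow_pos_of_pos
    refine Finset.sum_pos' (fun u _ => mul_nonneg (by norm_num) (Real.rpow_nonneg (hV u z₀) _)) ⟨true, Finset.mem_univ true, ?_⟩
    have := Real.rpow_pos_of_pos hz₀ (1 / (1 + ρ))
    positivity
  have hF₁ : 0 < F ρ₁ := hpos ρ₁ hρ₁
  have hF₂ : 0 < F ρ₂ := hpos ρ₂ hρ₂
  -- take logs
  have hlog : Real.logb 2 (F ρ₁) ≤ lam * Real.logb 2 (F ρ₂) := by
    have h1 : Real.logb 2 (F ρ₁) ≤ Real.logb 2 ((F ρ₂) ^ lam) :=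
      Real.logb_le_logb_of_le (by norm_num) hF₁ key
    have h2 : Real.logb 2 ((F ρ₂) ^ lam) = lam * Real.logb 2 (F ρ₂) := by
      rw [Real.logb, Real.logb, Real.log_rpow hF₂]; ring
    linarith [h1, h2.symm.le]
  have hE : lam * E0 ρ₂ V ≤ E0 ρ₁ V := by
    have e1 : E0 ρ₁ V = -Real.logb 2 (F ρ₁) := rfl
    have e2 : E0 ρ₂ V = -Real.logb 2 (F ρ₂) := rfl
    rw [e1, e2]; linarith
  rw [div_le_div_iff₀ hρ₂ hρ₁]
  have := mul_le_mul_of_nonneg_right hE hρ₂.le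
  rw [hlam] at this
  calc E0 ρ₂ V * ρ₁ = ρ₁ / ρ₂ * E0 ρ₂ V * ρ₂ := by field_simp
    _ ≤ E0 ρ₁ V * ρ₂ := this

/-- Gallager's `E₀(ρ,V)/ρ` is nonincreasing in `ρ > 0`; in particular
for `0 < δ < 1`, `E₀(1,V) ≤ E₀(δ,V)/δ`. -/
theorem E0_div_rho_antitone
    {Z : Type*} [Fintype Z] (V : Bool → Z → ℝ)
    (hV : ∀ u z, 0 ≤ V u z) (hsum : ∀ u, ∑ z, V u z = 1) :
    (∀ ρ₁ ρ₂ : ℝ, 0 < ρ₁ → ρ₁ ≤ ρ₂ → E0 ρ₂ V / ρ₂ ≤ E0 ρ₁ V / ρ₁)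
      ∧ ∀ δ : ℝ, δ ∈ Set.Ioo (0 : ℝ) 1 → E0 1 V ≤ E0 δ V / δ := by
  have main : ∀ ρ₁ ρ₂ : ℝ, 0 < ρ₁ → ρ₁ ≤ ρ₂ → E0 ρ₂ V / ρ₂ ≤ E0 ρ₁ V / ρ₁ := by
    intro ρ₁ ρ₂ h1 h12
    rcases eq_or_lt_of_le h12 with rfl | hlt
    · exact le_refl _
    · exact E0_key V hV hsum h1 hlt
  refine ⟨main, fun δ hδ => ?_⟩
  have := main δ 1 hδ.1 hδ.2.le
  simpa using this
end
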